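/- Let c ∈ ℝ^n with c_i ≥ δ for some δ ∈ (0, 1/n) and ∑_{i=1}^n c_i ≤ n. For any ζ ∈ ℝ^{n−1}, ζᵀ P̃_L ζ ≥ (c_n / ∑_{k=1}^n c_k) |ζ|², where P̃_L is the upper-left (n−1)×(n−1) submatrix of the matrix with entries δ_{ij} − √(c_i c_j)/∑_k c_k. In particular, if c_i ≥ δ for all i, then ζᵀ P̃_L ζ ≥ (δ/n)|ζ|². -/

import Mathlib

open Matrix

theorem submatrix_PL_posdef (n : ℕ) (δ : ℝ) (c : Fin (n + 1) → ℝ)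
    (hδ0 : 0 < δ) (hδ1 : δ < 1 / (n + 1)) (hc : ∀ i, δ ≤ c i)
    (hsum : ∑ i, c i ≤ (n + 1 : ℝ)) :
    ∀ ζ : Fin n → ℝ,
      (c (Fin.last n) / ∑ k, c k) * (∑ i, (ζ i) ^ 2) ≤
        ζ ⬝ᵥ (Matrix.of fun i j : Fin n =>
          (if i = j then (1:ℝ) else 0) -
            Real.sqrt (c i.castSucc * c j.castSucc) / ∑ k, c k).mulVec ζ ∧
      (δ / (n + 1)) * (∑ i, (ζ i) ^ 2) ≤
        ζ ⬝ᵥ (Matrix.of fun i j : Fin n =>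
          (if i = j then (1:ℝ) else 0) -
            Real.sqrt (c i.castSucc * c j.castSucc) / ∑ k, c k).mulVec ζ := by
  intro ζ
  set S : ℝ := ∑ k, c k with hSdef
  have hcpos : ∀ i, (0:ℝ) < c i := fun i => lt_of_lt_of_le hδ0 (hc i)
  have hS : 0 < S := Finset.sum_pos (fun i _ => hcpos i) Finset.univ_nonempty
  have hsqrt : ∀ i j : Fin n,
      Real.sqrt (c i.castSucc * c j.castSucc)
        = Real.sqrt (c i.castSucc) * Real.sqrt (c j.castSucc) :=
    fun i j => Real.sqrt_mul (hcpos _).le _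
  set T : ℝ := ∑ i : Fin n, Real.sqrt (c i.castSucc) * ζ i with hTdef
  have key : ζ ⬝ᵥ (Matrix.of fun i j : Fin n =>
      (if i = j then (1:ℝ) else 0) -
        Real.sqrt (c i.castSucc * c j.castSucc) / S).mulVec ζ
      = (∑ i, (ζ i) ^ 2) - T ^ 2 / S := by
    simp only [dotProduct, mulVec, Matrix.of_apply, hsqrt, sub_mul, ite_mul, one_mul,
      zero_mul, Finset.sum_ite_eq, Finset.mem_univ, if_true, Finset.sum_sub_distrib,
      mul_sub]
    congr 1
    · exact Finset.sum_congr rfl fun i _ => (sq (ζ i)).symm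
    · rw [sq, hTdef, Finset.sum_mul_sum, Finset.sum_div]
      refine Finset.sum_congr rfl fun i _ => ?_
      rw [Finset.sum_div, Finset.mul_sum]
      exact Finset.sum_congr rfl fun j _ => by ring
  rw [key]
  -- Cauchy-Schwarz
  have hCS : T ^ 2 ≤ (∑ i : Fin n, c i.castSucc) * (∑ i, (ζ i) ^ 2) := by
    have h := Finset.sum_mul_sq_le_sq_mul_sq (R := ℝ) Finset.univ
      (fun i : Fin n => Real.sqrt (c i.castSucc)) ζ
    calc T ^ 2 = (∑ i : Fin n, Real.sqrt (c i.castSucc) * ζ i) ^ 2 := by rw [hTdef]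
      _ ≤ (∑ i : Fin n, Real.sqrt (c i.castSucc) ^ 2) * (∑ i, (ζ i) ^ 2) := h
      _ = (∑ i : Fin n, c i.castSucc) * (∑ i, (ζ i) ^ 2) := by
          congr 1
          exact Finset.sum_congr rfl fun i _ => Real.sq_sqrt (hcpos _).le
  have hsplit : (∑ i : Fin n, c i.castSucc) = S - c (Fin.last n) := by
    rw [hSdef, Fin.sum_univ_castSucc]; ring
  have hznn : (0:ℝ) ≤ ∑ i, (ζ i) ^ 2 := Finset.sum_nonneg fun i _ => sq_nonneg _
  have main : (c (Fin.last n) / S) * (∑ i, (ζ i) ^ 2)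
      ≤ (∑ i, (ζ i) ^ 2) - T ^ 2 / S := by
    rw [div_mul_eq_mul_div, le_sub_iff_add_le, ← add_div, div_le_iff₀ hS]
    calc c (Fin.last n) * (∑ i, (ζ i) ^ 2) + T ^ 2
        ≤ c (Fin.last n) * (∑ i, (ζ i) ^ 2) + (S - c (Fin.last n)) * (∑ i, (ζ i) ^ 2) := by
          rw [← hsplit]; linarith [hCS]
      _ = (∑ i, (ζ i) ^ 2) * S := by ring
  refine ⟨main, le_trans ?_ main⟩
  have hpos : (0:ℝ) < (n:ℝ) + 1 := by positivity
  have : δ / (n + 1) ≤ c (Fin.last n) / S :=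
    div_le_div₀ (hcpos _).le (hc _) hS hsum
  exact mul_le_mul_of_nonneg_right this hznn
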